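/- The set of extreme points of the polytope SATP(m,n) is exactly the set of integral points of SATP_LP(m,n), and SATP(m,n) has exactly 2^m · 3^n extreme points. -/

import Mathlib

open Finset

/-- A point of ℝ^{6mn}: coordinates x^{k,l}_{i,j} with `i : Fin m`, `j : Fin n`,
`k : Fin 3` (the paper's k-1, since the paper indexes k ∈ {1,2,3}) and
`l : Fin 2` (the paper's l-1). -/
abbrev Pt (m n : ℕ) := Fin m → Fin n → Fin 3 → Fin 2 → ℝ

/-- The relaxation polytope SATP_LP(m,n), given by the constraints (i)-(iv). -/
def SATPLP (m n : ℕ) : Set (Pt m n) :=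
  {x | (∀ i j, ∑ k, ∑ l, x i j k l = 1) ∧
       (∀ i j t, ∑ k, x i j k 0 = ∑ k, x i t k 0) ∧
       (∀ k j i s, x i j k 0 + x i j k 1 = x s j k 0 + x s j k 1) ∧
       (∀ i j k l, 0 ≤ x i j k l)}

/-- The integral points of SATP_LP(m,n): the points all of whose coordinates are 0 or 1. -/
def IntPts (m n : ℕ) : Set (Pt m n) :=
  {x | x ∈ SATPLP m n ∧ ∀ i j k l, x i j k l = 0 ∨ x i j k l = 1}

/-- SATP(m,n): the convex hull of the integral points of SATP_LP(m,n). -/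
def SATP (m n : ℕ) : Set (Pt m n) := convexHull ℝ (IntPts m n)



def phi (m n : ℕ) (r : Fin m → Fin 2) (c : Fin n → Fin 3) : Pt m n :=
  fun i j k l => if k = c j ∧ l = r i then 1 else 0

lemma phi_mem (m n : ℕ) (r : Fin m → Fin 2) (c : Fin n → Fin 3) :
    phi m n r c ∈ IntPts m n := by
  refine ⟨⟨?_, ?_, ?_, ?_⟩, ?_⟩
  · intro i j
    have hc : c j = 0 ∨ c j = 1 ∨ c j = 2 := by omega
    have hr : r i = 0 ∨ r i = 1 := by omega
    rcases hc with h|h|h <;> rcases hr with h'|h' <;>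
      simp [phi, Fin.sum_univ_three, Fin.sum_univ_two, h, h'] <;> decide
  · intro i j t
    have hr : r i = 0 ∨ r i = 1 := by omega
    rcases hr with h'|h' <;>
      simp [phi, Fin.sum_univ_three, h'] <;>
      rcases (by omega : c j = 0 ∨ c j = 1 ∨ c j = 2) with h|h|h <;>
      rcases (by omega : c t = 0 ∨ c t = 1 ∨ c t = 2) with h2|h2|h2 <;>
      simp [h, h2]
  · intro k j i s
    have : ∀ i' : Fin m, phi m n r c i' j k 0 + phi m n r c i' j k 1
        = if k = c j then 1 else 0 := by
      intro i'
      rcases (by omega : r i' = 0 ∨ r i' = 1) with h|h <;>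
        by_cases hk : k = c j <;> simp [phi, h, hk]
    rw [this i, this s]
  · intro i j k l
    unfold phi; split <;> norm_num
  · intro i j k l
    unfold phi; split <;> simp

lemma cell6 (a b c d e f : ℝ)
    (ha : a = 0 ∨ a = 1) (hb : b = 0 ∨ b = 1) (hc : c = 0 ∨ c = 1)
    (hd : d = 0 ∨ d = 1) (he : e = 0 ∨ e = 1) (hf : f = 0 ∨ f = 1)
    (hs : a + b + c + d + e + f = 1) :
    ((a + c + e = 0 ∨ a + c + e = 1) ∧ (a + b = 0 ∨ a + b = 1) ∧
     (c + d = 0 ∨ c + d = 1) ∧ (e + f = 0 ∨ e + f = 1)) ∧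
    (a = 1 ↔ (a + b = 1 ∧ a + c + e = 1)) ∧
    (b = 1 ↔ (a + b = 1 ∧ b + d + f = 1)) ∧
    (c = 1 ↔ (c + d = 1 ∧ a + c + e = 1)) ∧
    (d = 1 ↔ (c + d = 1 ∧ b + d + f = 1)) ∧
    (e = 1 ↔ (e + f = 1 ∧ a + c + e = 1)) ∧
    (f = 1 ↔ (e + f = 1 ∧ b + d + f = 1)) := by
  rcases ha with rfl|rfl <;> rcases hb with rfl|rfl <;> rcases hc with rfl|rfl <;>
    rcases hd with rfl|rfl <;> rcases he with rfl|rfl <;> rcases hf with rfl|rfl <;>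
    norm_num at hs <;> norm_num

lemma pick3 (p q u : ℝ) (hp : p = 0 ∨ p = 1) (hq : q = 0 ∨ q = 1) (hu : u = 0 ∨ u = 1)
    (hs : p + q + u = 1) :
    (p = 1 ↔ (if p = 1 then (0 : Fin 3) else if q = 1 then 1 else 2) = 0) ∧
    (q = 1 ↔ (if p = 1 then (0 : Fin 3) else if q = 1 then 1 else 2) = 1) ∧
    (u = 1 ↔ (if p = 1 then (0 : Fin 3) else if q = 1 then 1 else 2) = 2) := by
  rcases hp with rfl|rfl <;> rcases hq with rfl|rfl <;> rcases hu with rfl|rfl <;>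
    norm_num at hs <;> norm_num <;> decide

lemma pick2 (p q : ℝ) (hp : p = 0 ∨ p = 1) (hq : q = 0 ∨ q = 1) (hs : p + q = 1) :
    (p = 1 ↔ (if p = 1 then (0 : Fin 2) else 1) = 0) ∧
    (q = 1 ↔ (if p = 1 then (0 : Fin 2) else 1) = 1) := by
  rcases hp with rfl|rfl <;> rcases hq with rfl|rfl <;> norm_num at hs <;> norm_num <;> decide

lemma int_char {m n : ℕ} (hm : 0 < m) (hn : 0 < n) {x : Pt m n} (hx : x ∈ IntPts m n) :
    ∃ (r : Fin m → Fin 2) (c : Fin n → Fin 3), x = phi m n r c := by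
  obtain ⟨⟨hsum, hrow, hcolc, _hpos⟩, h01⟩ := hx
  set i0 : Fin m := ⟨0, hm⟩
  set j0 : Fin n := ⟨0, hn⟩
  -- cell sums
  have hs6 : ∀ i j, x i j 0 0 + x i j 0 1 + x i j 1 0 + x i j 1 1 + x i j 2 0 + x i j 2 1 = 1 := by
    intro i j
    have := hsum i j
    simp [Fin.sum_univ_three, Fin.sum_univ_two] at this
    linarith
  have cell := fun i j => cell6 (x i j 0 0) (x i j 0 1) (x i j 1 0) (x i j 1 1)
      (x i j 2 0) (x i j 2 1) (h01 i j 0 0) (h01 i j 0 1) (h01 i j 1 0) (h01 i j 1 1)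
      (h01 i j 2 0) (h01 i j 2 1) (hs6 i j)
  -- column value: independent of i
  set col : Fin n → Fin 3 → ℝ := fun j k => x i0 j k 0 + x i0 j k 1 with hcoldef
  have hcol : ∀ i j k, x i j k 0 + x i j k 1 = col j k := fun i j k => hcolc k j i i0
  -- row values: independent of j
  set row : Fin m → Fin 2 → ℝ := fun i l => ∑ k, x i j0 k l with hrowdef
  have hrow0 : ∀ i j, x i j 0 0 + x i j 1 0 + x i j 2 0 = row i 0 := by
    intro i j
    have h := hrow i j j0
    simp only [Fin.sum_univ_three] at h
    simp only [hrowdef, Fin.sum_univ_three]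
    linarith
  have hrow1 : ∀ i j, x i j 0 1 + x i j 1 1 + x i j 2 1 = row i 1 := by
    intro i j
    have h1 := hrow0 i j
    have h2 := hrow0 i j0
    have h3 := hs6 i j
    have h4 := hs6 i j0
    simp only [hrowdef, Fin.sum_univ_three]
    linarith
  -- key: x i j k l = 1 ↔ col j k = 1 ∧ row i l = 1
  have key : ∀ i j k l, x i j k l = 1 ↔ (col j k = 1 ∧ row i l = 1) := by
    intro i j k l
    obtain ⟨_, ca, cb, cc, cd, ce, cf⟩ := cell i j
    have e0 := hcol i j 0; have e1 := hcol i j 1; have e2 := hcol i j 2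
    have f0 := hrow0 i j; have f1 := hrow1 i j
    rcases (by omega : k = 0 ∨ k = 1 ∨ k = 2) with rfl|rfl|rfl <;>
      rcases (by omega : l = 0 ∨ l = 1) with rfl|rfl
    · rw [ca]; constructor <;> rintro ⟨u, v⟩ <;> exact ⟨by linarith, by linarith⟩
    · rw [cb]; constructor <;> rintro ⟨u, v⟩ <;> exact ⟨by linarith, by linarith⟩
    · rw [cc]; constructor <;> rintro ⟨u, v⟩ <;> exact ⟨by linarith, by linarith⟩
    · rw [cd]; constructor <;> rintro ⟨u, v⟩ <;> exact ⟨by linarith, by linarith⟩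
    · rw [ce]; constructor <;> rintro ⟨u, v⟩ <;> exact ⟨by linarith, by linarith⟩
    · rw [cf]; constructor <;> rintro ⟨u, v⟩ <;> exact ⟨by linarith, by linarith⟩
  -- col and row values are 0/1 and sum to 1
  have col01 : ∀ j k, col j k = 0 ∨ col j k = 1 := by
    intro j k
    obtain ⟨⟨_, c1, c2, c3⟩, _⟩ := cell i0 j
    rcases (by omega : k = 0 ∨ k = 1 ∨ k = 2) with rfl|rfl|rfl <;> assumption
  have colsum : ∀ j, col j 0 + col j 1 + col j 2 = 1 := by
    intro j; have := hs6 i0 j; simp only [hcoldef]; linarith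
  have row01 : ∀ i l, row i l = 0 ∨ row i l = 1 := by
    intro i l
    obtain ⟨⟨c0, _⟩, _⟩ := cell i j0
    have f0 := hrow0 i j0; have f1 := hrow1 i j0
    rcases (by omega : l = 0 ∨ l = 1) with rfl|rfl
    · rcases c0 with h|h
      · left; linarith
      · right; linarith
    · have := hs6 i j0
      rcases c0 with h|h
      · right; linarith
      · left; linarith
  have rowsum : ∀ i, row i 0 + row i 1 = 1 := by
    intro i; have := hs6 i j0
    have f0 := hrow0 i j0; have f1 := hrow1 i j0
    linarith
  -- define r and c
  refine ⟨fun i => if row i 0 = 1 then 0 else 1,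
          fun j => if col j 0 = 1 then 0 else if col j 1 = 1 then 1 else 2, ?_⟩
  funext i j k l
  obtain ⟨p0, p1, p2⟩ := pick3 (col j 0) (col j 1) (col j 2)
      (col01 j 0) (col01 j 1) (col01 j 2) (colsum j)
  obtain ⟨q0, q1⟩ := pick2 (row i 0) (row i 1) (row01 i 0) (row01 i 1) (rowsum i)
  have hck : col j k = 1 ↔ (if col j 0 = 1 then (0 : Fin 3) else if col j 1 = 1 then 1 else 2) = k := by
    rcases (by omega : k = 0 ∨ k = 1 ∨ k = 2) with rfl|rfl|rfl
    exacts [p0, p1, p2]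
  have hrl : row i l = 1 ↔ (if row i 0 = 1 then (0 : Fin 2) else 1) = l := by
    rcases (by omega : l = 0 ∨ l = 1) with rfl|rfl
    exacts [q0, q1]
  by_cases h : (if col j 0 = 1 then (0 : Fin 3) else if col j 1 = 1 then 1 else 2) = k ∧
      (if row i 0 = 1 then (0 : Fin 2) else 1) = l
  · have hx1 : x i j k l = 1 := (key i j k l).mpr ⟨hck.mpr h.1, hrl.mpr h.2⟩
    simp only [phi]
    rw [if_pos ⟨h.1.symm, h.2.symm⟩]
    exact hx1
  · have hne : x i j k l ≠ 1 := fun hh =>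
      h ⟨hck.mp ((key i j k l).mp hh).1, hrl.mp ((key i j k l).mp hh).2⟩
    have hx0 : x i j k l = 0 := (h01 i j k l).resolve_right hne
    simp only [phi]
    rw [if_neg (fun hh => h ⟨hh.1.symm, hh.2.symm⟩)]
    exact hx0

lemma satp_cube {m n : ℕ} : SATP m n ⊆ {y : Pt m n | ∀ i j k l, y i j k l ∈ Set.Icc (0:ℝ) 1} := by
  apply convexHull_min
  · rintro y ⟨⟨_, _, _, hpos⟩, h01⟩ i j k l
    rcases h01 i j k l with h|h <;> rw [h] <;> norm_num
  · intro u hu v hv a b ha hb hab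
    intro i j k l
    have := (convex_Icc (0:ℝ) 1) (hu i j k l) (hv i j k l) ha hb hab
    simpa using this

lemma int_extreme {m n : ℕ} {x : Pt m n} (hx : x ∈ IntPts m n) :
    x ∈ Set.extremePoints ℝ (SATP m n) := by
  refine ⟨subset_convexHull ℝ _ hx, ?_⟩
  intro y hy z hz hseg
  obtain ⟨a, b, ha, hb, hab, hxyz⟩ := hseg
  have hy' := satp_cube hy
  have hz' := satp_cube hz
  obtain ⟨_, h01⟩ := hx
  have main : ∀ i j k l, y i j k l = x i j k l ∧ z i j k l = x i j k l := by
    intro i j k l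
    have hc : a * y i j k l + b * z i j k l = x i j k l := by
      have := congrFun (congrFun (congrFun (congrFun hxyz i) j) k) l
      simpa [smul_eq_mul] using this
    obtain ⟨hy0, hy1⟩ := hy' i j k l
    obtain ⟨hz0, hz1⟩ := hz' i j k l
    rcases h01 i j k l with h|h <;> rw [h] <;> rw [h] at hc
    · constructor <;> nlinarith
    · constructor <;> nlinarith
  funext i j k l
  exact (main i j k l).1

/-- the extreme points of SATP(m,n) are exactly the integral points of
SATP_LP(m,n), and there are exactly 2^m · 3^n of them. -/
theorem stmt1 (m n : ℕ) (hm : 0 < m) (hn : 0 < n) :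
    Set.extremePoints ℝ (SATP m n) = IntPts m n ∧
    Nat.card (IntPts m n) = 2 ^ m * 3 ^ n := by
  constructor
  · exact Set.Subset.antisymm (extremePoints_convexHull_subset) (fun x hx => int_extreme hx)
  · have hbij : Function.Bijective
        (fun p : (Fin m → Fin 2) × (Fin n → Fin 3) =>
          (⟨phi m n p.1 p.2, phi_mem m n p.1 p.2⟩ : IntPts m n)) := by
      constructor
      · rintro ⟨r, c⟩ ⟨r', c'⟩ h
        have h' : phi m n r c = phi m n r' c' := congrArg Subtype.val h
        have key : ∀ i j, c j = c' j ∧ r i = r' i := by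
          intro i j
          have := congrFun (congrFun (congrFun (congrFun h' i) j) (c j)) (r i)
          simp only [phi] at this
          by_contra hcon
          rw [if_neg hcon] at this
          norm_num at this
        simp only [Prod.mk.injEq]
        exact ⟨funext fun t => (key t ⟨0, hn⟩).2, funext fun t => (key ⟨0, hm⟩ t).1⟩
      · rintro ⟨x, hx⟩
        obtain ⟨r, c, rfl⟩ := int_char hm hn hx
        exact ⟨(r, c), rfl⟩
    have := Nat.card_eq_of_bijective _ hbij
    rw [← this]
    simp [Nat.card_prod, Nat.card_fun]
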